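/- arXiv:1207.4514 — 4 statements merged into one kernel-verified Lean document; each statement's English description precedes it below -/
import Mathlib

section
/- Let E be a Banach space and B a nonempty bounded subset of the dual space E* with Chebyshev radius r_B. Then the Chebyshev center C_B = {x ∈ E* : sup_{b∈B} ‖x − b‖ ≤ r_B} = ∩_{r > r_B} C_r is nonempty, convex, and compact in the weak* topology of E*, where C_r = {x ∈ E* : sup_{b∈B} ‖x − b‖ ≤ r}. -/
open NormedSpace Set

noncomputable def chebyshevRadius {Y : Type} [NormedAddCommGroup Y] (B : Set Y) : ℝ :=
  sInf {r : ℝ | 0 ≤ r ∧ ∃ x : Y, ∀ b ∈ B, ‖x - b‖ ≤ r}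

noncomputable def chebyshevCenter {Y : Type} [NormedAddCommGroup Y] (B : Set Y) : Set Y :=
  {x : Y | ∀ b ∈ B, ‖x - b‖ ≤ chebyshevRadius B}

section aux

variable (E : Type) [NormedAddCommGroup E] [NormedSpace ℝ E]

/-- `C_r` is weak*-closed. -/
lemma aux_isClosed (B : Set (StrongDual ℝ E)) (r : ℝ) (hr : 0 ≤ r) :
    IsClosed (StrongDual.toWeakDual '' {x : StrongDual ℝ E | ∀ b ∈ B, ‖x - b‖ ≤ r}) := by
  have himg : StrongDual.toWeakDual '' {x : StrongDual ℝ E | ∀ b ∈ B, ‖x - b‖ ≤ r}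
      = ⋂ b ∈ B, ⋂ v : E, {y : WeakDual ℝ E | ‖y v - b v‖ ≤ r * ‖v‖} := by
    ext y
    simp only [Set.mem_image, Set.mem_iInter, Set.mem_setOf_eq]
    constructor
    · rintro ⟨x, hx, rfl⟩ b hb v
      have := (x - b).le_opNorm v
      have h2 : ‖(x - b) v‖ ≤ r * ‖v‖ :=
        this.trans (mul_le_mul_of_nonneg_right (hx b hb) (norm_nonneg v))
      simpa using h2
    · intro h
      refine ⟨StrongDual.toWeakDual.symm y, fun b hb => ?_, by simp⟩
      refine ContinuousLinearMap.opNorm_le_bound _ hr fun v => ?_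
      simpa using h b hb v
  rw [himg]
  refine isClosed_biInter fun b _ => isClosed_iInter fun v => ?_
  exact isClosed_le (((WeakDual.eval_continuous v).sub continuous_const).norm) continuous_const

lemma aux_isCompact (B : Set (StrongDual ℝ E)) (b0 : StrongDual ℝ E) (hb0 : b0 ∈ B) (r : ℝ) (hr : 0 ≤ r) :
    IsCompact (StrongDual.toWeakDual '' {x : StrongDual ℝ E | ∀ b ∈ B, ‖x - b‖ ≤ r}) := by
  refine WeakDual.isCompact_of_bounded_of_closed ?_ (aux_isClosed E B r hr)
  rw [← WeakDual.isBounded_toWeakDual_preimage_iff_isBounded, Set.preimage_image_eq _ StrongDual.toWeakDual.injective]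
  refine (Metric.isBounded_iff_subset_closedBall 0).2 ⟨r + ‖b0‖, fun x hx => ?_⟩
  simp only [Metric.mem_closedBall, dist_zero_right]
  calc ‖x‖ ≤ ‖x - b0‖ + ‖b0‖ := by
        simpa using norm_add_le (x - b0) b0
    _ ≤ r + ‖b0‖ := by linarith [hx b0 hb0]

end aux

/-- for a nonempty bounded subset `B` of the dual `E*` of a
Banach space `E`, the Chebyshev center
`C_B = {x ∈ E* : sup_{b ∈ B} ‖x - b‖ ≤ r_B} = ⋂_{r > r_B} C_r` is nonempty,
convex and weak* compact, where `C_r = {x : sup_{b ∈ B} ‖x - b‖ ≤ r}`. -/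
theorem stmt4
    (E : Type) [NormedAddCommGroup E] [NormedSpace ℝ E]
    (B : Set (StrongDual ℝ E)) (hB_ne : B.Nonempty) (hB_bdd : Bornology.IsBounded B) :
    (chebyshevCenter B).Nonempty ∧
    Convex ℝ (chebyshevCenter B) ∧
    IsCompact ((StrongDual.toWeakDual (𝕜 := ℝ) (E := E)) '' chebyshevCenter B) ∧
    chebyshevCenter B =
      ⋂ (r : ℝ) (_ : chebyshevRadius B < r), {x : StrongDual ℝ E | ∀ b ∈ B, ‖x - b‖ ≤ r} := by
  obtain ⟨b0, hb0⟩ := hB_ne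
  set S : Set ℝ := {r : ℝ | 0 ≤ r ∧ ∃ x : StrongDual ℝ E, ∀ b ∈ B, ‖x - b‖ ≤ r} with hS
  obtain ⟨R, hR⟩ := (Metric.isBounded_iff_subset_closedBall b0).1 hB_bdd
  have hS_ne : S.Nonempty := by
    refine ⟨max R 0, le_max_right _ _, b0, fun b hb => ?_⟩
    have := hR hb
    simp only [Metric.mem_closedBall] at this
    calc ‖b0 - b‖ = dist b b0 := by rw [dist_eq_norm, norm_sub_rev]
      _ ≤ R := this
      _ ≤ max R 0 := le_max_left _ _
  have hS_bdd : BddBelow S := ⟨0, fun r hr => hr.1⟩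
  have hrB_def : chebyshevRadius B = sInf S := rfl
  have hrB0 : 0 ≤ chebyshevRadius B := le_csInf hS_ne fun r hr => hr.1
  -- nonemptiness of C_r for r > rB
  have hCr_ne : ∀ r : ℝ, chebyshevRadius B < r →
      ({x : StrongDual ℝ E | ∀ b ∈ B, ‖x - b‖ ≤ r}).Nonempty := by
    intro r hr
    obtain ⟨s, hsS, hsr⟩ := exists_lt_of_csInf_lt hS_ne hr
    obtain ⟨x, hx⟩ := hsS.2
    exact ⟨x, fun b hb => (hx b hb).trans hsr.le⟩
  -- equality
  have heq : chebyshevCenter B =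
      ⋂ (r : ℝ) (_ : chebyshevRadius B < r), {x : StrongDual ℝ E | ∀ b ∈ B, ‖x - b‖ ≤ r} := by
    ext x
    simp only [chebyshevCenter, Set.mem_setOf_eq, Set.mem_iInter]
    constructor
    · intro h r hr b hb
      exact (h b hb).trans hr.le
    · intro h b hb
      exact le_of_forall_gt_imp_ge_of_dense fun r hr => h r hr b hb
  -- convexity
  have hconv : Convex ℝ (chebyshevCenter B) := by
    intro x hx y hy a c ha hc hac
    intro b hb
    have : a • (x - b) + c • (y - b) = a • x + c • y - b := by
      rw [smul_sub, smul_sub, sub_add_sub_comm, ← add_smul, hac, one_smul]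
    rw [← this]
    calc ‖a • (x - b) + c • (y - b)‖ ≤ ‖a • (x - b)‖ + ‖c • (y - b)‖ := norm_add_le _ _
      _ = a * ‖x - b‖ + c * ‖y - b‖ := by
          rw [norm_smul, norm_smul, Real.norm_of_nonneg ha, Real.norm_of_nonneg hc]
      _ ≤ a * chebyshevRadius B + c * chebyshevRadius B := by
          gcongr
          exacts [hx b hb, hy b hb]
      _ = chebyshevRadius B := by rw [← add_mul, hac, one_mul]
  -- compactness
  have hcomp : IsCompact (StrongDual.toWeakDual '' chebyshevCenter B) :=
    aux_isCompact E B b0 hb0 (chebyshevRadius B) hrB0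
  -- nonemptiness via directed intersection of compacts
  have hne : (chebyshevCenter B).Nonempty := by
    have key : (StrongDual.toWeakDual '' chebyshevCenter B).Nonempty := by
      have himg : StrongDual.toWeakDual '' chebyshevCenter B =
          ⋂ r : {r : ℝ // chebyshevRadius B < r},
            StrongDual.toWeakDual '' {x : StrongDual ℝ E | ∀ b ∈ B, ‖x - b‖ ≤ (r : ℝ)} := by
        rw [heq]
        ext y
        constructor
        · rintro ⟨x, hx, rfl⟩
          simp only [Set.mem_iInter] at hx
          exact Set.mem_iInter.2 fun r => ⟨x, hx r r.2, rfl⟩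
        · intro hy
          have hy' := Set.mem_iInter.1 hy
          refine ⟨StrongDual.toWeakDual.symm y, ?_, by simp⟩
          simp only [Set.mem_iInter]
          intro r hr
          obtain ⟨x, hx, hxy⟩ := hy' ⟨r, hr⟩
          have hxeq : x = StrongDual.toWeakDual.symm y := by rw [← hxy]; exact (LinearEquiv.symm_apply_apply _ x).symm
          rwa [← hxeq]
      rw [himg]
      have : Nonempty {r : ℝ // chebyshevRadius B < r} :=
        ⟨⟨chebyshevRadius B + 1, by linarith⟩⟩
      refine IsCompact.nonempty_iInter_of_directed_nonempty_isCompact_isClosed _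
        ?_ ?_ ?_ ?_
      · rintro ⟨r, hr⟩ ⟨s, hs⟩
        refine ⟨⟨min r s, lt_min hr hs⟩, ?_, ?_⟩
        · exact Set.image_mono fun x hx b hb => (hx b hb).trans (min_le_left _ _)
        · exact Set.image_mono fun x hx b hb => (hx b hb).trans (min_le_right _ _)
      · rintro ⟨r, hr⟩
        exact (hCr_ne r hr).image _
      · rintro ⟨r, hr⟩
        exact aux_isCompact E B b0 hb0 r (hrB0.trans hr.le)
      · rintro ⟨r, hr⟩
        exact aux_isClosed E B r (hrB0.trans hr.le)
    obtain ⟨y, x, hx, -⟩ := key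
    exact ⟨x, hx⟩
  exact ⟨hne, hconv, hcomp, heq⟩
end

section
/- Let X be an L-embedded Banach space, so that X** = X ⊕ X_s for a closed subspace X_s of X** with ‖c + ξ‖ = ‖c‖ + ‖ξ‖ for all c ∈ X and ξ ∈ X_s (identifying X with its canonical image in X**). Let B be a nonempty bounded subset of X, and let C be the Chebyshev center of B computed in X**. Then C ⊆ X; more precisely, if x ∈ C is written as x = c + ξ with c ∈ X and ξ ∈ X_s, then ξ = 0. -/
open NormedSpace Set

/-- let `X` be an L-embedded Banach space, so that
`X** = X ⊕ X_s` for a closed subspace `X_s` of `X**` with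
`‖c + ξ‖ = ‖c‖ + ‖ξ‖` for `c ∈ X`, `ξ ∈ X_s` (identifying `X` with its
canonical image in `X**`). If `B` is a nonempty bounded subset of `X` and
`C` is the Chebyshev center of `B` computed in `X**`, then `C ⊆ X`; more
precisely, if `x ∈ C` is written `x = c + ξ` with `c ∈ X`, `ξ ∈ X_s`, then
`ξ = 0`. -/
theorem stmt5
    (X : Type) [NormedAddCommGroup X] [NormedSpace ℝ X] [CompleteSpace X]
    (Xs : Submodule ℝ (StrongDual ℝ (StrongDual ℝ X)))
    (hXs_closed : IsClosed (Xs : Set (StrongDual ℝ (StrongDual ℝ X))))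
    (hcompl : IsCompl (LinearMap.range (inclusionInDoubleDual ℝ X).toLinearMap) Xs)
    (hnorm : ∀ (c : X), ∀ ξ ∈ Xs,
      ‖inclusionInDoubleDual ℝ X c + ξ‖ = ‖inclusionInDoubleDual ℝ X c‖ + ‖ξ‖)
    (B : Set X) (hB_ne : B.Nonempty) (hB_bdd : Bornology.IsBounded B) :
    chebyshevCenter ((inclusionInDoubleDual ℝ X) '' B) ⊆
      Set.range (inclusionInDoubleDual ℝ X) ∧
    ∀ x ∈ chebyshevCenter ((inclusionInDoubleDual ℝ X) '' B),
      ∀ (c : X), ∀ ξ ∈ Xs, x = inclusionInDoubleDual ℝ X c + ξ → ξ = 0 := by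
  set J := inclusionInDoubleDual ℝ X with hJ
  have key : ∀ x ∈ chebyshevCenter (J '' B),
      ∀ (c : X), ∀ ξ ∈ Xs, x = J c + ξ → ξ = 0 := by
    intro x hx c ξ hξ hxeq
    set r := chebyshevRadius (J '' B) with hr
    have hbd : ∀ b ∈ B, ‖J c - J b‖ + ‖ξ‖ ≤ r := by
      intro b hb
      have h1 : ‖x - J b‖ ≤ r := hx (J b) ⟨b, hb, rfl⟩
      have h2 : x - J b = J (c - b) + ξ := by
        rw [hxeq, map_sub]; abel
      have h3 := hnorm (c - b) ξ hξ
      rw [h2, h3, map_sub] at h1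
      linarith
    have hbb : BddBelow {s : ℝ | 0 ≤ s ∧ ∃ y : StrongDual ℝ (StrongDual ℝ X), ∀ b ∈ J '' B, ‖y - b‖ ≤ s} :=
      ⟨0, fun s hs => hs.1⟩
    obtain ⟨b₀, hb₀⟩ := hB_ne
    have hmem : (r - ‖ξ‖) ∈
        {s : ℝ | 0 ≤ s ∧ ∃ y : StrongDual ℝ (StrongDual ℝ X), ∀ b ∈ J '' B, ‖y - b‖ ≤ s} := by
      constructor
      · have := hbd b₀ hb₀
        have : 0 ≤ ‖J c - J b₀‖ := norm_nonneg (J c - J b₀)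
        linarith [hbd b₀ hb₀]
      · refine ⟨J c, ?_⟩
        rintro _ ⟨b, hb, rfl⟩
        have := hbd b hb
        linarith
    have hle : r ≤ r - ‖ξ‖ := csInf_le hbb hmem
    have : ‖ξ‖ ≤ 0 := by linarith
    exact (ContinuousLinearMap.opNorm_zero_iff ξ).mp (le_antisymm this (norm_nonneg ξ))
  constructor
  · intro x hx
    obtain ⟨y, z, hy, hz, hyz⟩ :=
      Submodule.codisjoint_iff_exists_add_eq.mp hcompl.codisjoint x
    obtain ⟨c, rfl⟩ := hy
    have hz0 : z = 0 := key x hx c z hz (by rw [← hyz]; rfl)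
    exact ⟨c, by rw [← hyz, hz0, add_zero]; rfl⟩
  · exact key
end

section
/- Let X be a Banach space, B a nonempty bounded subset of X with Chebyshev radius r_B and Chebyshev center C (both computed in X), and T : X → X a nonexpansive map such that B ⊆ cl(T(B)) (norm closure). Then T(C) ⊆ C, i.e., for every x ∈ X with sup_{b∈B} ‖x − b‖ ≤ r_B one has sup_{b∈B} ‖T(x) − b‖ ≤ r_B. -/
open Set

/-- if `B` is a nonempty bounded subset of a Banach space `X`
with Chebyshev radius `r_B` and Chebyshev center `C`, and `T : X → X` is a
nonexpansive map with `B ⊆ cl(T(B))`, then `T(C) ⊆ C`; i.e. for every `x`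
with `sup_{b ∈ B} ‖x - b‖ ≤ r_B` one has `sup_{b ∈ B} ‖T x - b‖ ≤ r_B`. -/
theorem stmt6
    (X : Type) [NormedAddCommGroup X] [NormedSpace ℝ X] [CompleteSpace X]
    (B : Set X) (hB_ne : B.Nonempty) (hB_bdd : Bornology.IsBounded B)
    (T : X → X) (hT : ∀ x y : X, ‖T x - T y‖ ≤ ‖x - y‖)
    (hB_inv : B ⊆ closure (T '' B)) :
    ∀ x : X, (∀ b ∈ B, ‖x - b‖ ≤ chebyshevRadius B) →
      ∀ b ∈ B, ‖T x - b‖ ≤ chebyshevRadius B := by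
  intro x hx b hb
  refine le_of_forall_pos_le_add ?_
  intro ε hε
  obtain ⟨y, hy, hdist⟩ := Metric.mem_closure_iff.mp (hB_inv hb) ε hε
  obtain ⟨b', hb', rfl⟩ := hy
  calc ‖T x - b‖ ≤ ‖T x - T b'‖ + ‖T b' - b‖ := norm_sub_le_norm_sub_add_norm_sub _ _ _
    _ ≤ ‖x - b'‖ + ε := by
        have : ‖T b' - b‖ ≤ ε := by
          rw [← dist_eq_norm] at *
          exact le_of_lt (by rwa [dist_comm] at hdist)
        exact add_le_add (hT x b') this
    _ ≤ chebyshevRadius B + ε := add_le_add_left (hx b' hb') ε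
end

section
/- Let S be a discrete semigroup, X an L-embedded Banach space, {T_s : s ∈ S} a representation of S on X by nonexpansive maps, and B a nonempty bounded subset of X with B ⊆ cl(T_s(B)) for all s ∈ S. Let C be the Chebyshev center of B computed in X**. Then C is a nonempty, weakly compact, convex subset of X that is invariant under the representation: T_s(C) ⊆ C for all s ∈ S. -/
open NormedSpace Set

/-- A Banach space `X` is L-embedded if, identifying `X` with its canonical
image in the bidual `X**`, there is a closed subspace `X_s` of `X**` such
that `X** = X ⊕ X_s` with `‖x + ξ‖ = ‖x‖ + ‖ξ‖` for `x ∈ X`, `ξ ∈ X_s`. -/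
def IsLEmbedded (X : Type) [NormedAddCommGroup X] [NormedSpace ℝ X] : Prop :=
  ∃ Xs : Submodule ℝ (StrongDual ℝ (StrongDual ℝ X)),
    IsClosed (Xs : Set (StrongDual ℝ (StrongDual ℝ X))) ∧
    IsCompl (LinearMap.range (inclusionInDoubleDual ℝ X).toLinearMap) Xs ∧
    ∀ (x : X), ∀ ξ ∈ Xs,
      ‖inclusionInDoubleDual ℝ X x + ξ‖ = ‖inclusionInDoubleDual ℝ X x‖ + ‖ξ‖

/-- let `S` be a discrete semigroup, `X` an L-embedded Banach
space, `{T_s : s ∈ S}` a representation of `S` on `X` by nonexpansive maps,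
and `B` a nonempty bounded subset of `X` with `B ⊆ cl(T_s(B))` for all
`s ∈ S`. Let `C` be the Chebyshev center of `B` computed in `X**`. Then `C`
is contained in (the canonical image of) `X` and, regarded as a subset of
`X`, is nonempty, weakly compact, convex and invariant: `T_s(C) ⊆ C`. -/
theorem stmt13
    (S : Type) [Semigroup S]
    (X : Type) [NormedAddCommGroup X] [NormedSpace ℝ X] [CompleteSpace X]
    (hX : IsLEmbedded X)
    (T : S → X → X)
    (hrep : ∀ (s t : S) (x : X), T (s * t) x = T s (T t x))
    (hnonexp : ∀ (s : S) (x y : X), ‖T s x - T s y‖ ≤ ‖x - y‖)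
    (B : Set X) (hB_ne : B.Nonempty) (hB_bdd : Bornology.IsBounded B)
    (hB_inv : ∀ s : S, B ⊆ closure (T s '' B)) :
    chebyshevCenter ((inclusionInDoubleDual ℝ X) '' B) ⊆
      Set.range (inclusionInDoubleDual ℝ X) ∧
    ((inclusionInDoubleDual ℝ X) ⁻¹'
      chebyshevCenter ((inclusionInDoubleDual ℝ X) '' B)).Nonempty ∧
    Convex ℝ ((inclusionInDoubleDual ℝ X) ⁻¹'
      chebyshevCenter ((inclusionInDoubleDual ℝ X) '' B)) ∧
    IsCompact ((toWeakSpace ℝ X) '' ((inclusionInDoubleDual ℝ X) ⁻¹'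
      chebyshevCenter ((inclusionInDoubleDual ℝ X) '' B))) ∧
    ∀ s : S, Set.MapsTo (T s)
      ((inclusionInDoubleDual ℝ X) ⁻¹'
        chebyshevCenter ((inclusionInDoubleDual ℝ X) '' B))
      ((inclusionInDoubleDual ℝ X) ⁻¹'
        chebyshevCenter ((inclusionInDoubleDual ℝ X) '' B)) := by
  classical
  obtain ⟨Xs, _hXscl, hcompl, hLnorm⟩ := hX
  obtain ⟨b₀, hb₀⟩ := hB_ne
  set j : X →L[ℝ] StrongDual ℝ (StrongDual ℝ X) := inclusionInDoubleDual ℝ X with hjdef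
  set B' : Set (StrongDual ℝ (StrongDual ℝ X)) := j '' B with hB'def
  set r : ℝ := chebyshevRadius B' with hrdefn
  set Rset : Set ℝ :=
    {t : ℝ | 0 ≤ t ∧ ∃ x : StrongDual ℝ (StrongDual ℝ X), ∀ b ∈ B', ‖x - b‖ ≤ t} with hRsetdef
  have hrdef : r = sInf Rset := rfl
  have hiso : ∀ x y : X, ‖j x - j y‖ = ‖x - y‖ := by
    intro x y
    rw [← map_sub j x y]
    exact (inclusionInDoubleDualLi ℝ (E := X)).norm_map (x - y)
  -- the admissible radius set is nonempty and bounded below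
  obtain ⟨M, hM⟩ := hB_bdd.subset_closedBall b₀
  have hRne : Rset.Nonempty := by
    refine ⟨max M 0, le_max_right _ _, j b₀, ?_⟩
    rintro _ ⟨b, hb, rfl⟩
    rw [hiso]
    calc ‖b₀ - b‖ = dist b b₀ := by rw [dist_eq_norm, norm_sub_rev]
      _ ≤ M := Metric.mem_closedBall.mp (hM hb)
      _ ≤ max M 0 := le_max_left _ _
  have hRbdd : BddBelow Rset := ⟨0, fun t ht => ht.1⟩
  have hr0 : (0 : ℝ) ≤ r := by
    rw [hrdef]; exact le_csInf hRne fun t ht => ht.1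
  -- membership characterizations
  have hmemC : ∀ ξ : StrongDual ℝ (StrongDual ℝ X),
      ξ ∈ chebyshevCenter B' ↔ ∀ b ∈ B, ‖ξ - j b‖ ≤ r := by
    intro ξ
    constructor
    · intro h b hb; exact h (j b) ⟨b, hb, rfl⟩
    · rintro h _ ⟨b, hb, rfl⟩; exact h b hb
  have hmemC' : ∀ x : X, x ∈ j ⁻¹' chebyshevCenter B' ↔ ∀ b ∈ B, ‖x - b‖ ≤ r := by
    intro x
    rw [mem_preimage, hmemC]
    exact ⟨fun h b hb => by rw [← hiso]; exact h b hb,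
           fun h b hb => by rw [hiso]; exact h b hb⟩
  -- every Chebyshev center point lies in the image of X (uses L-embedding)
  have hrange : ∀ ξ ∈ chebyshevCenter B', ∃ x : X, j x = ξ := by
    intro ξ hξ
    have hsup : LinearMap.range (inclusionInDoubleDual ℝ X).toLinearMap ⊔ Xs = ⊤ :=
      hcompl.sup_eq_top
    have hmemtop : ξ ∈ (⊤ : Submodule ℝ (StrongDual ℝ (StrongDual ℝ X))) := trivial
    rw [← hsup] at hmemtop
    obtain ⟨p, hp, q, hq, hpq⟩ := Submodule.mem_sup.mp hmemtop
    obtain ⟨x, hx⟩ := LinearMap.mem_range.mp hp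
    have hx' : j x = p := hx
    have hnormb : ∀ b ∈ B, ‖x - b‖ + ‖q‖ ≤ r := by
      intro b hb
      have h1 : ‖ξ - j b‖ ≤ r := (hmemC ξ).mp hξ b hb
      have h2 : ξ - j b = j (x - b) + q := by
        rw [map_sub j x b, ← hpq, ← hx']; abel
      have h3 : ‖j (x - b)‖ = ‖x - b‖ := by
        rw [map_sub j x b]; exact hiso x b
      rw [h2, hLnorm (x - b) q hq, h3] at h1
      exact h1
    have hq0 : ‖q‖ ≤ 0 := by
      have hmem : r - ‖q‖ ∈ Rset := by
        refine ⟨?_, j x, ?_⟩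
        · have h1 := hnormb b₀ hb₀
          have h2 := norm_nonneg (x - b₀)
          linarith
        · rintro _ ⟨b, hb, rfl⟩
          rw [hiso]
          have := hnormb b hb
          linarith
      have : r ≤ r - ‖q‖ := by rw [hrdef]; exact csInf_le hRbdd hmem
      linarith
    have hq0' : q = 0 := (norm_le_zero_iff (E := StrongDual ℝ (StrongDual ℝ X))).mp hq0
    exact ⟨x, by rw [hx', ← hpq, hq0', add_zero]⟩
  -- the Chebyshev center is nonempty (weak* compactness / Banach-Alaoglu)
  have hCne : (chebyshevCenter B').Nonempty := by
    set K : {ε : ℝ // 0 < ε} → Set (WeakDual ℝ (StrongDual ℝ X)) := fun ε =>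
      ⋂ b ∈ B, WeakDual.toStrongDual ⁻¹' Metric.closedBall (j b) (r + ε.1) with hKdef
    have hKmem : ∀ (ε : {ε : ℝ // 0 < ε}) (ξ : WeakDual ℝ (StrongDual ℝ X)),
        ξ ∈ K ε ↔ ∀ b ∈ B, ‖WeakDual.toStrongDual ξ - j b‖ ≤ r + ε.1 := by
      intro ε ξ
      simp only [hKdef, mem_iInter, mem_preimage, Metric.mem_closedBall, dist_eq_norm (E := StrongDual ℝ (StrongDual ℝ X))]
    have hKne : ∀ ε, (K ε).Nonempty := by
      rintro ⟨ε, hε⟩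
      have hlt : sInf Rset < r + ε := by rw [← hrdef]; linarith
      obtain ⟨t, htR, htlt⟩ := exists_lt_of_csInf_lt hRne hlt
      obtain ⟨x, hx⟩ := htR.2
      refine ⟨WeakDual.toStrongDual.symm x, ?_⟩
      rw [hKmem]
      intro b hb
      have : ‖x - j b‖ ≤ t := hx (j b) ⟨b, hb, rfl⟩
      calc ‖WeakDual.toStrongDual (WeakDual.toStrongDual.symm x) - j b‖
          = ‖x - j b‖ := by rw [LinearEquiv.apply_symm_apply]
        _ ≤ t := this
        _ ≤ r + ε := le_of_lt htlt
    have hKcl : ∀ ε, IsClosed (K ε) := fun ε =>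
      isClosed_biInter fun b _ => WeakDual.isClosed_closedBall _ _
    have hKcp : ∀ ε, IsCompact (K ε) := by
      intro ε
      refine (WeakDual.isCompact_closedBall (j b₀) (r + ε.1)).of_isClosed_subset
        (hKcl ε) ?_
      intro ξ hξ
      have := (hKmem ε ξ).mp hξ b₀ hb₀
      simpa only [mem_preimage, Metric.mem_closedBall, dist_eq_norm (E := StrongDual ℝ (StrongDual ℝ X))] using this
    have hdir : Directed (· ⊇ ·) K := by
      rintro ⟨ε₁, h₁⟩ ⟨ε₂, h₂⟩
      refine ⟨⟨min ε₁ ε₂, lt_min h₁ h₂⟩, ?_, ?_⟩ <;>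
        · intro ξ hξ
          rw [hKmem] at hξ ⊢
          intro b hb
          refine le_trans (hξ b hb) ?_
          simp only []
          have := min_le_left ε₁ ε₂
          have := min_le_right ε₁ ε₂
          linarith
    have : Nonempty {ε : ℝ // 0 < ε} := ⟨⟨1, one_pos⟩⟩
    obtain ⟨ξ, hξ⟩ :=
      IsCompact.nonempty_iInter_of_directed_nonempty_isCompact_isClosed K hdir hKne hKcp hKcl
    refine ⟨WeakDual.toStrongDual ξ, (hmemC _).mpr ?_⟩
    intro b hb
    by_contra hcon
    push_neg at hcon
    have hε : 0 < (‖WeakDual.toStrongDual ξ - j b‖ - r) / 2 := by linarith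
    have hmem := mem_iInter.mp hξ ⟨_, hε⟩
    have := (hKmem _ ξ).mp hmem b hb
    simp only [] at this
    linarith
  -- the preimage as an intersection of closed balls
  have hC'eq : j ⁻¹' chebyshevCenter B' = ⋂ b ∈ B, Metric.closedBall b r := by
    ext x
    rw [hmemC' x]
    simp only [mem_iInter, Metric.mem_closedBall, dist_eq_norm]
  -- part 1: center contained in range
  have part1 : chebyshevCenter B' ⊆ Set.range j := by
    intro ξ hξ
    obtain ⟨x, hx⟩ := hrange ξ hξ
    exact ⟨x, hx⟩
  -- part 2: nonempty
  have part2 : (j ⁻¹' chebyshevCenter B').Nonempty := by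
    obtain ⟨ξ, hξ⟩ := hCne
    obtain ⟨x, hx⟩ := hrange ξ hξ
    exact ⟨x, by rw [mem_preimage, hx]; exact hξ⟩
  -- part 3: convex
  have part3 : Convex ℝ (j ⁻¹' chebyshevCenter B') := by
    rw [hC'eq]
    exact convex_iInter₂ fun b _ => convex_closedBall b r
  -- part 4: weakly compact
  have part4 : IsCompact ((toWeakSpace ℝ X) '' (j ⁻¹' chebyshevCenter B')) := by
    -- the center, as a subset of the weak-star dual, is compact
    set Cw : Set (WeakDual ℝ (StrongDual ℝ X)) :=
      ⋂ b ∈ B, WeakDual.toStrongDual ⁻¹' Metric.closedBall (j b) r with hCwdef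
    have hCwmem : ∀ ξ : WeakDual ℝ (StrongDual ℝ X),
        ξ ∈ Cw ↔ WeakDual.toStrongDual ξ ∈ chebyshevCenter B' := by
      intro ξ
      rw [hmemC]
      simp only [hCwdef, mem_iInter, mem_preimage, Metric.mem_closedBall, dist_eq_norm (E := StrongDual ℝ (StrongDual ℝ X))]
    have hCwcl : IsClosed Cw :=
      isClosed_biInter fun b _ => WeakDual.isClosed_closedBall _ _
    have hCwcp : IsCompact Cw := by
      refine (WeakDual.isCompact_closedBall (j b₀) r).of_isClosed_subset hCwcl ?_
      intro ξ hξ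
      have := ((hCwmem ξ).mp hξ)
      have h2 : ‖WeakDual.toStrongDual ξ - j b₀‖ ≤ r := (hmemC _).mp this b₀ hb₀
      simpa only [mem_preimage, Metric.mem_closedBall, dist_eq_norm (E := StrongDual ℝ (StrongDual ℝ X))] using h2
    -- the natural map from the weak space to the weak-star bidual is inducing
    set J : WeakSpace ℝ X → WeakDual ℝ (StrongDual ℝ X) := fun x =>
      StrongDual.toWeakDual (j ((toWeakSpace ℝ X).symm x)) with hJdef
    have hJcont : Continuous J := by
      apply WeakBilin.continuous_of_continuous_eval
      intro f
      exact WeakBilin.eval_continuous ((topDualPairing ℝ X).flip) f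
    have hJind : Topology.IsInducing J := by
      refine Topology.IsInducing.of_comp hJcont (WeakBilin.coeFn_continuous _) ?_
      exact ⟨rfl⟩
    rw [hJind.isCompact_iff]
    have himg : J '' ((toWeakSpace ℝ X) '' (j ⁻¹' chebyshevCenter B')) = Cw := by
      ext ξ
      constructor
      · rintro ⟨_, ⟨x, hx, rfl⟩, rfl⟩
        rw [hCwmem]
        exact hx
      · intro hξ
        rw [hCwmem] at hξ
        obtain ⟨x, hx⟩ := hrange _ hξ
        refine ⟨toWeakSpace ℝ X x, ⟨x, ?_, rfl⟩, ?_⟩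
        · rw [mem_preimage, hx]; exact hξ
        · show StrongDual.toWeakDual (j ((toWeakSpace ℝ X).symm (toWeakSpace ℝ X x))) = ξ
          rw [LinearEquiv.symm_apply_apply, hx]
          rfl
    rw [himg]
    exact hCwcp
  -- part 5: invariance
  have part5 : ∀ s : S, Set.MapsTo (T s) (j ⁻¹' chebyshevCenter B')
      (j ⁻¹' chebyshevCenter B') := by
    intro s x hx
    rw [hmemC'] at hx ⊢
    intro b hb
    have hcl : closure (T s '' B) ⊆ Metric.closedBall (T s x) r := by
      apply closure_minimal
      · rintro _ ⟨b', hb', rfl⟩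
        rw [Metric.mem_closedBall, dist_comm, dist_eq_norm]
        exact le_trans (hnonexp s x b') (hx b' hb')
      · exact Metric.isClosed_closedBall
    have := hcl (hB_inv s hb)
    rw [Metric.mem_closedBall, dist_comm, dist_eq_norm] at this
    exact this
  exact ⟨part1, part2, part3, part4, part5⟩
end
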